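/- Let a < b be real numbers and let V : ℝ → ℝ be twice continuously differentiable on (a,b) with V''(x) < 0 for all x ∈ (a,b). Let J be an open interval contained in the image of (a,b) under V', let I : ℝ → ℝ satisfy I(y) ∈ (a,b) and V'(I(y)) = y for all y ∈ J, and define v(y) = V(I(y)) − y·I(y). Let δ, r, θ ∈ ℝ and p : ℝ → ℝ → ℝ, and suppose that for all x ∈ (a,b): δ·V(x) = −θ·(V'(x))²/V''(x) + p(x, V'(x)) + r·x·V'(x). Then for all y ∈ J: δ·(v(y) − y·v'(y)) = θ·y²·v''(y) + p(−v'(y), y) − r·y·v'(y). -/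

import Mathlib

/-- Transformation (A-33): the unconstrained-region HJB equation
`δV = −θ(V')²/V'' + p(x,V') + rxV'` becomes, under the dual transformation
`v(y) = V(I(y)) − y·I(y)`, the quasilinear ODE
`δ(v − y v') = θ y² v'' + p(−v', y) − r y v'`. -/
theorem dual_transform_ode
    (a b : ℝ) (hab : a < b)
    (V V' V'' : ℝ → ℝ)
    (hd1 : ∀ x ∈ Set.Ioo a b, HasDerivAt V (V' x) x)
    (hd2 : ∀ x ∈ Set.Ioo a b, HasDerivAt V' (V'' x) x)
    (hd2c : ContinuousOn V'' (Set.Ioo a b))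
    (hneg : ∀ x ∈ Set.Ioo a b, V'' x < 0)
    (c d : ℝ)
    (hJ : Set.Ioo c d ⊆ V' '' Set.Ioo a b)
    (I : ℝ → ℝ)
    (hI : ∀ y ∈ Set.Ioo c d, I y ∈ Set.Ioo a b ∧ V' (I y) = y)
    (v : ℝ → ℝ)
    (hv : ∀ y : ℝ, v y = V (I y) - y * I y)
    (δ r θ : ℝ) (p : ℝ → ℝ → ℝ)
    (hODE : ∀ x ∈ Set.Ioo a b,
      δ * V x = -θ * (V' x) ^ 2 / V'' x + p x (V' x) + r * x * V' x) :
    ∀ y ∈ Set.Ioo c d,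
      δ * (v y - y * deriv v y) =
        θ * y ^ 2 * deriv (deriv v) y + p (-(deriv v y)) y - r * y * deriv v y := by
  have hopen : IsOpen (Set.Ioo a b) := isOpen_Ioo
  have hJopen : IsOpen (Set.Ioo c d) := isOpen_Ioo
  -- V' is strictly antitone on (a,b)
  have hV'cont : ContinuousOn V' (Set.Ioo a b) := fun x hx =>
    ((hd2 x hx).continuousAt).continuousWithinAt
  have hanti : StrictAntiOn V' (Set.Ioo a b) := by
    apply strictAntiOn_of_deriv_neg (convex_Ioo a b) hV'cont
    intro x hx
    rw [hopen.interior_eq] at hx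
    rw [(hd2 x hx).deriv]
    exact hneg x hx
  -- I is strictly antitone on (c,d)
  have hIanti : StrictAntiOn I (Set.Ioo c d) := by
    intro y1 h1 y2 h2 h12
    rcases lt_trichotomy (I y2) (I y1) with h | h | h
    · exact h
    · exfalso
      have := (hI y1 h1).2
      rw [← h, (hI y2 h2).2] at this
      exact (ne_of_gt h12) this
    · exfalso
      have := hanti (hI y1 h1).1 (hI y2 h2).1 h
      rw [(hI y1 h1).2, (hI y2 h2).2] at this
      exact absurd h12 (not_lt.mpr this.le)
  -- the image I '' (c,d) is open
  have himage : I '' Set.Ioo c d = Set.Ioo a b ∩ V' ⁻¹' Set.Ioo c d := by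
    ext x
    constructor
    · rintro ⟨y, hy, rfl⟩
      exact ⟨(hI y hy).1, by rw [Set.mem_preimage, (hI y hy).2]; exact hy⟩
    · rintro ⟨hx, hx'⟩
      refine ⟨V' x, hx', ?_⟩
      have h1 := (hI _ hx').1
      have h2 := (hI _ hx').2
      exact hanti.injOn h1 hx h2
  have himage_open : IsOpen (I '' Set.Ioo c d) := by
    rw [himage]
    exact hV'cont.isOpen_inter_preimage hopen hJopen
  -- I is continuous on (c,d)
  have hIcont : ∀ y ∈ Set.Ioo c d, ContinuousAt I y := by
    intro y hy
    have hmono : StrictMonoOn (fun z => -I z) (Set.Ioo c d) := fun y1 h1 y2 h2 h12 =>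
      neg_lt_neg (hIanti h1 h2 h12)
    have : ContinuousAt (fun z => -I z) y := by
      apply hmono.continuousAt_of_image_mem_nhds (hJopen.mem_nhds hy)
      have : (fun z => -I z) '' Set.Ioo c d = (fun t => -t) '' (I '' Set.Ioo c d) := by
        rw [Set.image_image]
      rw [this]
      have hop : IsOpen ((fun t : ℝ => -t) '' (I '' Set.Ioo c d)) :=
        (Homeomorph.neg ℝ).isOpenMap _ himage_open
      exact hop.mem_nhds (Set.mem_image_of_mem _ (Set.mem_image_of_mem I hy))
    have := this.neg
    convert this using 1; funext z; simp
  -- I has derivative (V'' (I y))⁻¹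
  have hIderiv : ∀ y ∈ Set.Ioo c d, HasDerivAt I (V'' (I y))⁻¹ y := by
    intro y hy
    refine HasDerivAt.of_local_left_inverse (hIcont y hy) (hd2 _ (hI y hy).1)
      (ne_of_lt (hneg _ (hI y hy).1)) ?_
    filter_upwards [hJopen.mem_nhds hy] with z hz
    exact (hI z hz).2
  -- v has derivative -I y at y
  have hvderiv : ∀ y ∈ Set.Ioo c d, HasDerivAt v (-(I y)) y := by
    intro y hy
    have h1 : HasDerivAt (fun z => V (I z) - z * I z)
        (V' (I y) * (V'' (I y))⁻¹ - (1 * I y + y * (V'' (I y))⁻¹)) y := by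
      exact ((hd1 _ (hI y hy).1).comp y (hIderiv y hy)).sub
        ((hasDerivAt_id y).mul (hIderiv y hy))
    have h2 : HasDerivAt v
        (V' (I y) * (V'' (I y))⁻¹ - (1 * I y + y * (V'' (I y))⁻¹)) y := by
      refine h1.congr_of_eventuallyEq ?_
      filter_upwards with z using (hv z)
    have h3 : V' (I y) * (V'' (I y))⁻¹ - (1 * I y + y * (V'' (I y))⁻¹) = -(I y) := by
      rw [(hI y hy).2]; ring
    rwa [h3] at h2
  have hdv : ∀ y ∈ Set.Ioo c d, deriv v y = -(I y) := fun y hy => (hvderiv y hy).deriv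
  intro y hy
  -- second derivative
  have hdv2 : deriv (deriv v) y = -(V'' (I y))⁻¹ := by
    have heq : deriv v =ᶠ[nhds y] (fun z => -(I z)) := by
      filter_upwards [hJopen.mem_nhds hy] with z hz using hdv z hz
    rw [heq.deriv_eq]
    exact ((hIderiv y hy).neg).deriv
  have hx := (hI y hy).1
  have hODEy := hODE (I y) hx
  rw [(hI y hy).2] at hODEy
  rw [hdv y hy, hdv2, hv y]
  have hV''ne : V'' (I y) ≠ 0 := ne_of_lt (hneg _ hx)
  have : -θ * y ^ 2 / V'' (I y) = θ * y ^ 2 * -(V'' (I y))⁻¹ := by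
    field_simp
  rw [this] at hODEy
  calc δ * (V (I y) - y * I y - y * -I y) = δ * V (I y) := by ring
    _ = θ * y ^ 2 * -(V'' (I y))⁻¹ + p (I y) y + r * I y * y := hODEy
    _ = θ * y ^ 2 * -(V'' (I y))⁻¹ + p (- -I y) y - r * y * -I y := by
        rw [neg_neg]; ring
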